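/- Let G = ⟨a⟩ ≅ Z_{2^n} with n ≥ 3 act on itself, and let Hol(G) = G_R ⋊ Aut(G) act on the set G, where G_R acts by right multiplication. For any nonidentity g ∈ G, the stabilizer of g in Hol(G) is ⟨g^{-2} x, g^{5^{-1}-1} y⟩. -/

import Mathlib

/-- The element `a^b x^?y^?` of the holomorph of `ZMod N`, viewed as the permutation
`g ↦ (g + b) * u` of `ZMod N`: first translate by `b` (right multiplication by `a^b`),
then apply the automorphism "multiplication by the unit `u`". -/
def aff (N : ℕ) (u : (ZMod N)ˣ) (b : ZMod N) : Equiv.Perm (ZMod N) :=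
  (Equiv.addRight b).trans (Units.mulRight u)

/-- The automorphism `y : a ↦ a^5` of `ZMod (2^n)` as a unit. -/
def u5 (n : ℕ) : (ZMod (2 ^ n))ˣ :=
  ZMod.unitOfCoprime 5 (Nat.Coprime.pow_right n (by decide))


lemma five_pow_two_pow : ∀ k : ℕ, ∃ m : ℕ, Odd m ∧ 5 ^ (2 ^ k) = 1 + 2 ^ (k + 2) * m := by
  intro k
  induction k with
  | zero => exact ⟨1, odd_one, by norm_num⟩
  | succ k ih =>
    obtain ⟨m, hm, h⟩ := ih
    refine ⟨m + 2 ^ (k + 1) * m ^ 2, ?_, ?_⟩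
    · rcases hm with ⟨j, hj⟩
      exact ⟨j + 2 ^ k * m ^ 2, by subst hj; ring⟩
    · have h2 : (5:ℕ) ^ (2 ^ (k+1)) = (5 ^ (2 ^ k)) ^ 2 := by
        rw [← pow_mul]; ring_nf
      rw [h2, h]; ring


lemma u5_val (n : ℕ) : ((u5 n : (ZMod (2^n))ˣ) : ZMod (2^n)) = 5 := by
  simp [u5]


lemma orderOf_u5 (n : ℕ) (hn : 3 ≤ n) : orderOf (u5 n) = 2 ^ (n - 2) := by
  haveI : NeZero (2^n) := ⟨by positivity⟩
  have h2 : n - 2 = (n - 3) + 1 := by omega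
  rw [h2]
  refine orderOf_eq_prime_pow ?_ ?_
  · -- (u5 n) ^ 2 ^ (n-3) ≠ 1
    obtain ⟨m, hm, h⟩ := five_pow_two_pow (n - 3)
    have hk : (n - 3) + 2 = n - 1 := by omega
    rw [hk] at h
    intro hcontra
    have hv : ((5:ℕ) : ZMod (2^n)) ^ (2 ^ (n-3)) = 1 := by
      have := congrArg Units.val hcontra
      simpa [u5_val, Units.val_pow_eq_pow_val] using this
    rw [← Nat.cast_pow, h] at hv
    have hdvd : (2:ℕ)^n ∣ 2 ^ (n-1) * m := by
      have hz : (((2:ℕ) ^ (n-1) * m : ℕ) : ZMod (2^n)) = 0 := by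
        push_cast at hv ⊢
        linear_combination hv
      exact (ZMod.natCast_eq_zero_iff _ _).mp hz
    have h2n : (2:ℕ)^n = 2^(n-1) * 2 := by
      rw [← pow_succ]; congr 1; omega
    rw [h2n] at hdvd
    have hdm : (2:ℕ) ∣ m := (mul_dvd_mul_iff_left (a := (2:ℕ)^(n-1)) (by positivity)).mp hdvd
    rcases hm with ⟨j, hj⟩
    omega
  · obtain ⟨m, hm, h⟩ := five_pow_two_pow (n - 2)
    have hk : (n - 2) + 2 = n := by omega
    rw [hk] at h
    have h3 : (n - 3) + 1 = n - 2 := by omega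
    rw [h3]
    apply Units.ext
    rw [Units.val_pow_eq_pow_val, u5_val]
    have hv : ((5:ℕ) : ZMod (2^n)) ^ (2 ^ (n-2)) = 1 := by
      rw [← Nat.cast_pow, h]
      push_cast
      rw [show ((2:ZMod (2^n)))^n = ((2^n:ℕ):ZMod (2^n)) by push_cast; ring,
        ZMod.natCast_self, zero_mul, add_zero]
    simpa using hv

lemma closure_eq_top (n : ℕ) (hn : 3 ≤ n) :
    Subgroup.closure {(-1 : (ZMod (2^n))ˣ), u5 n} = ⊤ := by
  haveI : NeZero ((2:ℕ)^n) := ⟨by positivity⟩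
  set H := Subgroup.closure {(-1 : (ZMod (2^n))ˣ), u5 n} with hH
  have h5H : u5 n ∈ H := Subgroup.subset_closure (by simp)
  have hm1 : (-1 : (ZMod (2^n))ˣ) ∈ H := Subgroup.subset_closure (by simp)
  have hz : Subgroup.zpowers (u5 n) ≤ H := Subgroup.zpowers_le.mpr h5H
  have hcardz : Nat.card (Subgroup.zpowers (u5 n)) = 2 ^ (n - 2) := by
    rw [Nat.card_zpowers, orderOf_u5 n hn]
  have hcardG : Nat.card ((ZMod (2^n))ˣ) = 2 ^ (n - 1) := by
    rw [Nat.card_eq_fintype_card, ZMod.card_units_eq_totient,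
      Nat.totient_prime_pow Nat.prime_two (by omega : 0 < n)]
    omega
  have hdvd1 : (2:ℕ) ^ (n-2) ∣ Nat.card H := hcardz ▸ Subgroup.card_dvd_of_le hz
  have hdvd2 : Nat.card H ∣ 2 ^ (n - 1) := hcardG ▸ Subgroup.card_subgroup_dvd_card H
  obtain ⟨j, hj, hjcard⟩ := (Nat.dvd_prime_pow Nat.prime_two).mp hdvd2
  have hjge : n - 2 ≤ j := by
    have := hjcard ▸ hdvd1
    exact (Nat.pow_dvd_pow_iff_le_right (by norm_num)).mp this
  rcases (by omega : j = n - 2 ∨ j = n - 1) with hj2 | hj1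
  · exfalso
    -- then H = zpowers (u5 n), contradicting -1 ∈ H
    have heq : Subgroup.zpowers (u5 n) = H := by
      apply Subgroup.eq_of_le_of_card_ge hz
      rw [hcardz, hjcard, hj2]
    rw [← heq] at hm1
    obtain ⟨k, hk⟩ := hm1
    -- map to units of ZMod 4
    have hdvd4 : (4:ℕ) ∣ 2^n := by
      have : (4:ℕ) = 2^2 := by norm_num
      rw [this]; exact pow_dvd_pow 2 (by omega)
    let f : (ZMod (2^n))ˣ →* (ZMod 4)ˣ := Units.map (ZMod.castHom hdvd4 (ZMod 4)).toMonoidHom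
    have hval : ((u5 n : (ZMod (2^n))ˣ) : ZMod (2^n)) = ((5:ℕ) : ZMod (2^n)) := by
      simp [u5]
    have hf5 : f (u5 n) = 1 := by
      refine Units.ext ?_
      have h5 : (f (u5 n) : ZMod 4) = ZMod.castHom hdvd4 (ZMod 4) ((5:ℕ) : ZMod (2^n)) := by
        simp [f, hval]
      rw [h5, map_natCast]
      decide
    have hfm1 : f (-1) = -1 := by
      refine Units.ext ?_
      simp [f]
    have hcon := congrArg f hk
    simp only [map_zpow, hf5, one_zpow, hfm1] at hcon
    exact (by decide : (1 : (ZMod 4)ˣ) ≠ -1) hcon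
  · apply Subgroup.eq_top_of_card_eq
    rw [hjcard, hj1, hcardG]

lemma aff_apply (N : ℕ) (u : (ZMod N)ˣ) (b x : ZMod N) :
    aff N u b x = (x + b) * u := rfl

/-- The stabilizer embedding of the unit group into permutations. -/
def phi (N : ℕ) (g : ZMod N) : (ZMod N)ˣ →* Equiv.Perm (ZMod N) where
  toFun u := aff N u ((↑u⁻¹ - 1) * g)
  map_one' := by
    ext x
    simp [aff_apply]
  map_mul' u v := by
    ext x
    simp only [Equiv.Perm.mul_apply, aff_apply, Units.val_mul, mul_inv_rev]
    have hu : ((u⁻¹ : (ZMod N)ˣ) : ZMod N) * u = 1 := by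
      rw [← Units.val_mul, inv_mul_cancel, Units.val_one]
    have hv : ((v⁻¹ : (ZMod N)ˣ) : ZMod N) * v = 1 := by
      rw [← Units.val_mul, inv_mul_cancel, Units.val_one]
    linear_combination (((v⁻¹:(ZMod N)ˣ):ZMod N) * g * (v:ZMod N) - g) * hu + (1 - (u:ZMod N)) * g * hv


/-- For a nonidentity `g ∈ Z_{2^n}` (`n ≥ 3`), the stabilizer of `g` in
`Hol(Z_{2^n})` (the set of elements `a^b x^β y^δ` of the holomorph fixing `g`) is the
subgroup generated by `g^{-2} x` and `g^{5^{-1} - 1} y`. -/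
theorem stabilizer_eq (n : ℕ) (hn : 3 ≤ n) (g : ZMod (2 ^ n)) (hg : g ≠ 0) :
    {σ : Equiv.Perm (ZMod (2 ^ n)) |
        (∃ (u : (ZMod (2 ^ n))ˣ) (b : ZMod (2 ^ n)), σ = aff (2 ^ n) u b) ∧ σ g = g}
      = ↑(Subgroup.closure
          {aff (2 ^ n) (-1) (-2 * g),
           aff (2 ^ n) (u5 n)
             (((((u5 n)⁻¹ : (ZMod (2 ^ n))ˣ) : ZMod (2 ^ n)) - 1) * g)}) := by
  haveI : NeZero ((2:ℕ)^n) := ⟨by positivity⟩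
  have hgen1 : aff (2 ^ n) (-1) (-2 * g) = phi (2^n) g (-1) := by
    show _ = aff (2^n) (-1) _
    congr 1
    rw [inv_neg, inv_one, Units.val_neg, Units.val_one]
    ring
  have hgen2 : aff (2 ^ n) (u5 n) (((((u5 n)⁻¹ : (ZMod (2 ^ n))ˣ) : ZMod (2 ^ n)) - 1) * g)
      = phi (2^n) g (u5 n) := rfl
  rw [hgen1, hgen2]
  have hclos : Subgroup.closure {phi (2^n) g (-1), phi (2^n) g (u5 n)}
      = (Subgroup.closure {(-1 : (ZMod (2^n))ˣ), u5 n}).map (phi (2^n) g) := by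
    rw [MonoidHom.map_closure]
    congr 1
    rw [Set.image_insert_eq, Set.image_singleton]
  rw [hclos, closure_eq_top n hn]
  ext σ
  simp only [Set.mem_setOf_eq, SetLike.mem_coe, Subgroup.mem_map, Subgroup.mem_top, true_and]
  constructor
  · rintro ⟨⟨u, b, rfl⟩, hfix⟩
    refine ⟨u, ?_⟩
    have hb : b = (((u⁻¹ : (ZMod (2^n))ˣ) : ZMod (2^n)) - 1) * g := by
      rw [aff_apply] at hfix
      have := congrArg (· * ((u⁻¹ : (ZMod (2^n))ˣ) : ZMod (2^n))) hfix
      have hu : ((u : ZMod (2^n))) * ((u⁻¹ : (ZMod (2^n))ˣ) : ZMod (2^n)) = 1 := by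
        rw [← Units.val_mul, mul_inv_cancel, Units.val_one]
      linear_combination this - (g + b) * hu
    rw [hb]
    rfl
  · rintro ⟨u, rfl⟩
    refine ⟨⟨u, _, rfl⟩, ?_⟩
    show aff _ _ _ g = g
    rw [aff_apply]
    have hu : (((u⁻¹ : (ZMod (2^n))ˣ) : ZMod (2^n))) * u = 1 := by
      rw [← Units.val_mul, inv_mul_cancel, Units.val_one]
    linear_combination g * hu
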